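/- arXiv:2306.15621 — 8 statements merged into one kernel-verified Lean document; each statement's English description precedes it below -/
import Mathlib

section
/- Let 𝒳 ⊆ ℝ^d be an open convex domain, p ∈ 𝒳 a site, f_p a τ-admissible distance function, and B ⊂ 𝒳 a Euclidean ball. If B and p are (τκ)-separated for some κ > 1, then f_p⁺(B) ≤ f_p⁻(B) · κ/(κ − 1). -/
open Metric

/-- Lemma 2.2(i) of the paper: for a `τ`-admissible distance function `f` with site `p`
on an open convex domain `𝒳`, if a Euclidean ball `B ⊆ 𝒳` is `(τκ)`-separated from `p`
for some `κ > 1`, then `f⁺(B) ≤ f⁻(B) · κ/(κ-1)`. -/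
theorem stmt0
    {d : ℕ} (𝒳 : Set (EuclideanSpace ℝ (Fin d)))
    (hopen : IsOpen 𝒳) (hconv : Convex ℝ 𝒳)
    (p : EuclideanSpace ℝ (Fin d)) (hp : p ∈ 𝒳)
    (f : EuclideanSpace ℝ (Fin d) → ℝ)
    (hsmooth : ContDiffOn ℝ 2 f 𝒳)
    (hnonneg : ∀ x ∈ 𝒳, 0 ≤ f x)
    (τ : ℝ) (hτ : 0 < τ)
    (hgrad : ∀ x ∈ 𝒳, ‖gradient f x‖ * ‖x - p‖ ≤ τ * f x)
    (hhess : ∀ x ∈ 𝒳, ‖fderiv ℝ (gradient f) x‖ * ‖x - p‖ ^ 2 ≤ τ ^ 2 * f x)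
    (c : EuclideanSpace ℝ (Fin d)) (r : ℝ) (hr : 0 < r)
    (hB : closedBall c r ⊆ 𝒳)
    (κ : ℝ) (hκ : 1 < κ)
    (hsep : infDist p (closedBall c r) / diam (closedBall c r) ≥ τ * κ) :
    sSup (f '' closedBall c r) ≤ sInf (f '' closedBall c r) * κ / (κ - 1) := by
  have hκ0 : (0:ℝ) < κ := lt_trans one_pos hκ
  set B := closedBall c r with hBdef
  have hBne : B.Nonempty := ⟨c, mem_closedBall_self hr.le⟩
  have hBb : Bornology.IsBounded B := isBounded_closedBall
  -- key gradient bound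
  have hkey : ∀ z ∈ B, ∀ x ∈ B, ∀ y ∈ B, ‖gradient f z‖ * ‖x - y‖ * κ ≤ f z := by
    intro z hz x hx y hy
    rcases eq_or_ne (‖x - y‖) 0 with h0 | h0
    · rw [h0]; simpa using hnonneg z (hB hz)
    · have hxy : 0 < ‖x - y‖ := (norm_nonneg _).lt_of_ne' h0
      have hdist : dist x y ≤ diam B := dist_le_diam_of_mem hBb hx hy
      have hdiam : 0 < diam B := lt_of_lt_of_le (by rwa [dist_eq_norm]) hdist
      have hD : τ * κ * diam B ≤ infDist p B := by
        rw [ge_iff_le, le_div_iff₀ hdiam] at hsep; linarith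
      have hDz : infDist p B ≤ ‖z - p‖ := by
        have := infDist_le_dist_of_mem (s := B) (x := p) hz
        rwa [dist_comm, dist_eq_norm] at this
      have hg := hgrad z (hB hz)
      have hnn : 0 ≤ ‖gradient f z‖ := norm_nonneg _
      have h1 : ‖gradient f z‖ * (τ * κ * ‖x - y‖) ≤ τ * f z := by
        calc ‖gradient f z‖ * (τ * κ * ‖x - y‖)
            ≤ ‖gradient f z‖ * (τ * κ * diam B) := by
              apply mul_le_mul_of_nonneg_left _ hnn
              have : ‖x - y‖ ≤ diam B := by rwa [dist_eq_norm] at hdist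
              exact mul_le_mul_of_nonneg_left this (by positivity)
          _ ≤ ‖gradient f z‖ * ‖z - p‖ := by
              apply mul_le_mul_of_nonneg_left (le_trans hD hDz) hnn
          _ ≤ τ * f z := hg
      nlinarith
  -- Gronwall-type bound
  have hmain : ∀ x ∈ B, ∀ y ∈ B, f x ≤ f y * Real.exp (1/κ) := by
    intro x hx y hy
    set γ : ℝ → EuclideanSpace ℝ (Fin d) := fun t => y + t • (x - y) with hγ
    have hγmem : ∀ t ∈ Set.Icc (0:ℝ) 1, γ t ∈ B := fun t ht =>
      (convex_closedBall c r).add_smul_sub_mem hy hx ht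
    set h : ℝ → ℝ := fun t => Real.exp (-(t/κ)) * f (γ t) with hh
    have hderiv : ∀ t ∈ Set.Icc (0:ℝ) 1,
        HasDerivAt h ((Real.exp (-(t/κ)) * (-(1/κ))) * f (γ t)
          + Real.exp (-(t/κ)) * ((fderiv ℝ f (γ t)) (x - y))) t := by
      intro t ht
      have hmem := hγmem t ht
      have hfd : DifferentiableAt ℝ f (γ t) :=
        (hsmooth.differentiableOn (by norm_num)).differentiableAt (hopen.mem_nhds (hB hmem))
      have hγd : HasDerivAt γ (x - y) t := by
        have := ((hasDerivAt_id t).smul_const (x - y)).const_add y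
        rw [one_smul] at this
        exact this
      have hgd : HasDerivAt (fun t => f (γ t)) ((fderiv ℝ f (γ t)) (x - y)) t :=
        hfd.hasFDerivAt.comp_hasDerivAt t hγd
      have hed : HasDerivAt (fun t => Real.exp (-(t/κ))) (Real.exp (-(t/κ)) * (-(1/κ))) t := by
        have h1 : HasDerivAt (fun t : ℝ => -(t/κ)) (-(1/κ)) t := by
          exact ((hasDerivAt_id t).div_const κ).neg
        exact (Real.hasDerivAt_exp (-(t/κ))).comp t h1
      exact hed.mul hgd
    have hanti : AntitoneOn h (Set.Icc 0 1) := by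
      apply antitoneOn_of_deriv_nonpos (convex_Icc 0 1)
      · exact fun t ht => (hderiv t ht).continuousAt.continuousWithinAt
      · intro t ht
        rw [interior_Icc] at ht
        exact (hderiv t (Set.mem_Icc_of_Ioo ht)).differentiableAt.differentiableWithinAt
      · intro t ht
        rw [interior_Icc] at ht
        have ht' := Set.mem_Icc_of_Ioo ht
        rw [(hderiv t ht').deriv]
        have hmem := hγmem t ht'
        have hgn : (fderiv ℝ f (γ t)) (x - y) ≤ f (γ t) / κ := by
          have hle : (fderiv ℝ f (γ t)) (x - y) ≤ ‖gradient f (γ t)‖ * ‖x - y‖ := by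
            have := (fderiv ℝ f (γ t)).le_opNorm (x - y)
            have hn : ‖fderiv ℝ f (γ t)‖ = ‖gradient f (γ t)‖ := by
              rw [gradient]; exact (LinearIsometryEquiv.norm_map _ _).symm
            calc (fderiv ℝ f (γ t)) (x - y) ≤ ‖(fderiv ℝ f (γ t)) (x - y)‖ := le_abs_self _
              _ ≤ ‖fderiv ℝ f (γ t)‖ * ‖x - y‖ := this
              _ = ‖gradient f (γ t)‖ * ‖x - y‖ := by rw [hn]
          have hk := hkey (γ t) hmem x hx y hy
          rw [le_div_iff₀ hκ0]
          nlinarith [mul_le_mul_of_nonneg_right hle hκ0.le]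
        have hexp : 0 < Real.exp (-(t/κ)) := Real.exp_pos _
        have : Real.exp (-(t/κ)) * ((fderiv ℝ f (γ t)) (x - y))
            ≤ Real.exp (-(t/κ)) * (f (γ t) / κ) := by
          exact mul_le_mul_of_nonneg_left hgn hexp.le
        have h2 : (Real.exp (-(t/κ)) * (-(1/κ))) * f (γ t)
            = -(Real.exp (-(t/κ)) * (f (γ t) / κ)) := by ring
        linarith [this, h2.le]
    have h10 : h 1 ≤ h 0 :=
      hanti (Set.mem_Icc.2 ⟨le_refl 0, zero_le_one⟩) (Set.mem_Icc.2 ⟨zero_le_one, le_refl 1⟩)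
        zero_le_one
    have hγ0 : γ 0 = y := by simp [hγ]
    have hγ1 : γ 1 = x := by simp [hγ]
    have h0v : h 0 = f y := by simp [hh, hγ0]
    have h1v : h 1 = Real.exp (-(1/κ)) * f x := by simp [hh, hγ1]
    rw [h0v, h1v] at h10
    have hepos : 0 < Real.exp (-(1/κ)) := Real.exp_pos _
    rw [Real.exp_neg, inv_mul_le_iff₀ (Real.exp_pos _)] at h10
    linarith [h10, mul_comm (f y) (Real.exp (1/κ))]
  -- conclude
  have hcont : ContinuousOn f B := hsmooth.continuousOn.mono hB
  have hScomp : IsCompact (f '' B) :=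
    (isCompact_closedBall c r).image_of_continuousOn hcont
  have hSne : (f '' B).Nonempty := hBne.image f
  have hSbdd : BddBelow (f '' B) := hScomp.bddBelow
  have hInf_nonneg : 0 ≤ sInf (f '' B) := by
    apply le_csInf hSne
    rintro b ⟨z, hz, rfl⟩
    exact hnonneg z (hB hz)
  have hsup : sSup (f '' B) ≤ sInf (f '' B) * Real.exp (1/κ) := by
    apply csSup_le hSne
    rintro b ⟨z, hz, rfl⟩
    have : f z / Real.exp (1/κ) ≤ sInf (f '' B) := by
      apply le_csInf hSne
      rintro b' ⟨w, hw, rfl⟩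
      rw [div_le_iff₀ (Real.exp_pos _)]
      exact hmain z hz w hw
    calc f z = (f z / Real.exp (1/κ)) * Real.exp (1/κ) := by
          field_simp
      _ ≤ sInf (f '' B) * Real.exp (1/κ) :=
          mul_le_mul_of_nonneg_right this (Real.exp_pos _).le
  have hexp_le : Real.exp (1/κ) ≤ κ / (κ - 1) := by
    have hκ1 : 0 < κ - 1 := by linarith
    have h1 : (κ - 1)/κ ≤ Real.exp (-(1/κ)) := by
      have := Real.add_one_le_exp (-(1/κ))
      have heq : -(1/κ) + 1 = (κ - 1)/κ := by field_simp; ring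
      linarith [heq ▸ this]
    have h2 : 0 < (κ - 1)/κ := div_pos hκ1 hκ0
    have h3 : Real.exp (1/κ) = 1 / Real.exp (-(1/κ)) := by
      rw [Real.exp_neg]; field_simp
    rw [h3]
    calc 1 / Real.exp (-(1/κ)) ≤ 1 / ((κ - 1)/κ) :=
        one_div_le_one_div_of_le h2 h1
      _ = κ / (κ - 1) := by field_simp
  calc sSup (f '' B) ≤ sInf (f '' B) * Real.exp (1/κ) := hsup
    _ ≤ sInf (f '' B) * (κ / (κ - 1)) :=
        mul_le_mul_of_nonneg_left hexp_le hInf_nonneg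
    _ = sInf (f '' B) * κ / (κ - 1) := by ring
end

section
/- Let 𝒳 ⊆ ℝ^d be an open convex domain, p ∈ 𝒳 a site, f_p a τ-admissible distance function, and B ⊂ 𝒳 a Euclidean ball. If B and p are (τκ)-separated for some κ > 1, then for every x ∈ B, ‖∇f_p(x)‖ ≤ f_p⁺(B)/(κ · diam(B)). -/
open Metric

/-- Lemma 2.2(ii) of the paper: for a `τ`-admissible distance function `f` with site `p`
on an open convex domain `𝒳`, if a Euclidean ball `B ⊆ 𝒳` is `(τκ)`-separated from `p`
for some `κ > 1`, then for every `x ∈ B`, `‖∇f(x)‖ ≤ f⁺(B) / (κ · diam B)`. -/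
theorem stmt1
    {d : ℕ} (𝒳 : Set (EuclideanSpace ℝ (Fin d)))
    (hopen : IsOpen 𝒳) (hconv : Convex ℝ 𝒳)
    (p : EuclideanSpace ℝ (Fin d)) (hp : p ∈ 𝒳)
    (f : EuclideanSpace ℝ (Fin d) → ℝ)
    (hsmooth : ContDiffOn ℝ 2 f 𝒳)
    (hnonneg : ∀ x ∈ 𝒳, 0 ≤ f x)
    (τ : ℝ) (hτ : 0 < τ)
    (hgrad : ∀ x ∈ 𝒳, ‖gradient f x‖ * ‖x - p‖ ≤ τ * f x)
    (hhess : ∀ x ∈ 𝒳, ‖fderiv ℝ (gradient f) x‖ * ‖x - p‖ ^ 2 ≤ τ ^ 2 * f x)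
    (c : EuclideanSpace ℝ (Fin d)) (r : ℝ) (hr : 0 < r)
    (hB : closedBall c r ⊆ 𝒳)
    (κ : ℝ) (hκ : 1 < κ)
    (hsep : infDist p (closedBall c r) / diam (closedBall c r) ≥ τ * κ) :
    ∀ x ∈ closedBall c r,
      ‖gradient f x‖ ≤ sSup (f '' closedBall c r) / (κ * diam (closedBall c r)) := by
  intro x hx
  set B := closedBall c r with hBdef
  set D := diam B with hD
  have hτκ : 0 < τ * κ := mul_pos hτ (lt_trans one_pos hκ)
  -- D > 0
  have hDpos : 0 < D := by
    rcases lt_or_ge 0 D with h | h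
    · exact h
    · have hD0 : D = 0 := le_antisymm h diam_nonneg
      rw [hD0] at hsep
      simp at hsep
      linarith
  -- infDist bound
  have hinf : τ * κ * D ≤ infDist p B := by
    have := hsep
    rw [ge_iff_le, le_div_iff₀ hDpos] at this
    exact this
  -- ‖x - p‖ ≥ τκD
  have hxp : τ * κ * D ≤ ‖x - p‖ := by
    have h1 : infDist p B ≤ dist p x := infDist_le_dist_of_mem hx
    have h2 : dist p x = ‖x - p‖ := by rw [dist_eq_norm, norm_sub_rev]
    linarith
  have hxX : x ∈ 𝒳 := hB hx
  have hfx : 0 ≤ f x := hnonneg x hxX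
  -- f x ≤ sSup (f '' B)
  have hBcpt : IsCompact B := isCompact_closedBall c r
  have hcont : ContinuousOn f B := (hsmooth.continuousOn).mono hB
  have hbdd : BddAbove (f '' B) := (hBcpt.image_of_continuousOn hcont).bddAbove
  have hle : f x ≤ sSup (f '' B) := le_csSup hbdd ⟨x, hx, rfl⟩
  -- main chain
  have hxp_pos : 0 < ‖x - p‖ := lt_of_lt_of_le (mul_pos hτκ hDpos) hxp
  have key : ‖gradient f x‖ * (τ * κ * D) ≤ τ * f x := by
    calc ‖gradient f x‖ * (τ * κ * D) ≤ ‖gradient f x‖ * ‖x - p‖ :=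
          mul_le_mul_of_nonneg_left hxp (norm_nonneg _)
      _ ≤ τ * f x := hgrad x hxX
  have hκD : 0 < κ * D := mul_pos (lt_trans one_pos hκ) hDpos
  rw [le_div_iff₀ hκD]
  have : ‖gradient f x‖ * (κ * D) ≤ f x := by
    have h := key
    nlinarith
  linarith
end

section
/- Let f be a τ-admissible scaling distance function with site p and unit ball K, let B be a Euclidean ball containing p with center p′, and let x be a point that is β-separated from B for some β ≥ 2τ. Define the perturbed function f′(x) = f(x + p − p′) (the scaling distance function with the same unit ball K but with site p′, which is also τ-admissible). Then |f′(x) − f(x)| / f(x) ≤ 2τ/β. -/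
open Metric

private lemma aux_fderiv_norm_gauge
    {d : ℕ} (K : Set (EuclideanSpace ℝ (Fin d)))
    (p : EuclideanSpace ℝ (Fin d)) (τ : ℝ)
    (hdiff : ∀ z : EuclideanSpace ℝ (Fin d), z ≠ 0 → ContDiffAt ℝ 2 (gauge K) z)
    (hgrad : ∀ x, x ≠ p →
      ‖gradient (fun y => gauge K (y - p)) x‖ * ‖x - p‖ ≤ τ * gauge K (x - p))
    (z : EuclideanSpace ℝ (Fin d)) (hz : z ≠ 0) :
    ‖fderiv ℝ (gauge K) z‖ * ‖z‖ ≤ τ * gauge K z := by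
  have hzp : z + p ≠ p := by
    intro h
    exact hz (by simpa using h)
  have h := hgrad (z + p) hzp
  simp only [add_sub_cancel_right] at h
  have hd : DifferentiableAt ℝ (gauge K) z :=
    (hdiff z hz).differentiableAt (by norm_num)
  have h2 : HasFDerivAt (fun y : EuclideanSpace ℝ (Fin d) => y - p)
      (ContinuousLinearMap.id ℝ (EuclideanSpace ℝ (Fin d))) (z + p) :=
    (hasFDerivAt_id _).sub_const p
  have h1 : HasFDerivAt (gauge K) (fderiv ℝ (gauge K) z) ((fun y => y - p) (z + p)) := by
    simpa using hd.hasFDerivAt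
  have hcomp : HasFDerivAt (fun y => gauge K (y - p)) (fderiv ℝ (gauge K) z) (z + p) := by
    simpa [Function.comp_def] using h1.comp (z + p) h2
  have hfd : fderiv ℝ (fun y => gauge K (y - p)) (z + p) = fderiv ℝ (gauge K) z :=
    hcomp.fderiv
  have hnorm : ‖gradient (fun y => gauge K (y - p)) (z + p)‖ = ‖fderiv ℝ (gauge K) z‖ := by
    rw [gradient, hfd]
    exact LinearIsometryEquiv.norm_map _ _
  rwa [hnorm] at h

/-- Lemma 4.3 of the paper (perturbation): let `f = gauge K (· - p)` be a `τ`-admissible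
scaling distance function whose unit ball is the convex body `K`, let `B` be a Euclidean
ball with center `p'` containing `p`, and let `x` be `β`-separated from `B` for `β ≥ 2τ`.
With `f' (x) = f (x + p - p') = gauge K (x - p')`, we have `|f'(x) - f(x)| / f(x) ≤ 2τ/β`. -/
theorem stmt4
    {d : ℕ} (K : Set (EuclideanSpace ℝ (Fin d)))
    (hKconv : Convex ℝ K) (hKcl : IsClosed K) (hKbd : Bornology.IsBounded K)
    (hK0 : (0 : EuclideanSpace ℝ (Fin d)) ∈ interior K)
    (τ : ℝ) (hτ : 0 < τ)
    (p p' : EuclideanSpace ℝ (Fin d)) (r : ℝ)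
    (hp : p ∈ closedBall p' r)
    (hdiff : ∀ z : EuclideanSpace ℝ (Fin d), z ≠ 0 → ContDiffAt ℝ 2 (gauge K) z)
    (hgrad : ∀ x, x ≠ p →
      ‖gradient (fun y => gauge K (y - p)) x‖ * ‖x - p‖ ≤ τ * gauge K (x - p))
    (hhess : ∀ x, x ≠ p →
      ‖fderiv ℝ (gradient (fun y => gauge K (y - p))) x‖ * ‖x - p‖ ^ 2
        ≤ τ ^ 2 * gauge K (x - p))
    (β : ℝ) (hβ : 2 * τ ≤ β)
    (x : EuclideanSpace ℝ (Fin d))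
    (hsep : infDist x (closedBall p' r) / diam (closedBall p' r) ≥ β) :
    |gauge K (x - p') - gauge K (x - p)| / gauge K (x - p) ≤ 2 * τ / β := by
  set B : Set (EuclideanSpace ℝ (Fin d)) := closedBall p' r with hB
  set δ : ℝ := diam B with hδdef
  have hβpos : 0 < β := lt_of_lt_of_le (by linarith) hβ
  have hr0 : 0 ≤ r := le_trans dist_nonneg (mem_closedBall.mp hp)
  have hp'B : p' ∈ B := mem_closedBall_self hr0
  -- δ > 0
  have hδpos : 0 < δ := by
    rcases (show (0:ℝ) ≤ δ from hδdef ▸ diam_nonneg).lt_or_eq with h | h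
    · exact h
    · exfalso
      rw [← h, div_zero] at hsep
      linarith
  have hI : β * δ ≤ infDist x B := by
    rw [ge_iff_le, le_div_iff₀ hδpos] at hsep
    exact hsep
  have hIpos : 0 < β * δ := mul_pos hβpos hδpos
  set z₀ : EuclideanSpace ℝ (Fin d) := x - p with hz₀
  set z₁ : EuclideanSpace ℝ (Fin d) := x - p' with hz₁
  set S : Set (EuclideanSpace ℝ (Fin d)) := segment ℝ z₀ z₁ with hS
  -- membership facts
  have memfact : ∀ z ∈ S, β * δ ≤ ‖z‖ ∧ ‖z - z₀‖ ≤ δ := by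
    intro z hzS
    rw [hS, segment_eq_image'] at hzS
    obtain ⟨t, ht, hteq⟩ := hzS
    have hzeq : z = z₀ + t • (z₁ - z₀) := hteq.symm
    set q : EuclideanSpace ℝ (Fin d) := p + t • (p' - p) with hq
    have hzq : z = x - q := by
      rw [hzeq, hz₀, hz₁, hq]; module
    have hqseg : q ∈ segment ℝ p p' := by
      rw [segment_eq_image']; exact ⟨t, ht, rfl⟩
    have hqB : q ∈ B := (convex_closedBall p' r).segment_subset hp hp'B hqseg
    constructor
    · rw [hzq]
      calc β * δ ≤ infDist x B := hI
        _ ≤ dist x q := infDist_le_dist_of_mem hqB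
        _ = ‖x - q‖ := dist_eq_norm _ _
    · have h1 : z - z₀ = t • (z₁ - z₀) := by rw [hzeq]; abel
      rw [h1, norm_smul]
      have h2 : ‖z₁ - z₀‖ = dist p p' := by
        rw [hz₀, hz₁, dist_eq_norm]
        congr 1
        abel
      rw [h2, Real.norm_eq_abs, abs_of_nonneg ht.1]
      calc t * dist p p' ≤ 1 * dist p p' :=
            mul_le_mul_of_nonneg_right ht.2 dist_nonneg
        _ = dist p p' := one_mul _
        _ ≤ δ := dist_le_diam_of_mem isBounded_closedBall hp hp'B
  have hne0 : ∀ z ∈ S, z ≠ 0 := by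
    intro z hzS h0
    have := (memfact z hzS).1
    rw [h0, norm_zero] at this
    linarith
  -- differentiability and continuity on S
  have hdiffS : ∀ z ∈ S, DifferentiableAt ℝ (gauge K) z := fun z hzS =>
    (hdiff z (hne0 z hzS)).differentiableAt (by norm_num)
  have hcontS : ContinuousOn (gauge K) S := fun z hzS =>
    (hdiffS z hzS).continuousAt.continuousWithinAt
  -- maximum of gauge on S
  have hScomp : IsCompact S := by
    rw [hS, segment_eq_image']
    exact isCompact_Icc.image (by fun_prop)
  have hSne : S.Nonempty := ⟨z₀, left_mem_segment ℝ _ _⟩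
  obtain ⟨w, hwS, hw⟩ := hScomp.exists_isMaxOn hSne hcontS
  set M : ℝ := gauge K w with hM
  have hMnonneg : 0 ≤ M := gauge_nonneg _
  -- fderiv bound on S
  set C : ℝ := τ * M / (β * δ) with hC
  have hCnonneg : 0 ≤ C := div_nonneg (mul_nonneg hτ.le hMnonneg) hIpos.le
  have hbound : ∀ z ∈ S, ‖fderiv ℝ (gauge K) z‖ ≤ C := by
    intro z hzS
    have h1 := aux_fderiv_norm_gauge K p τ hdiff hgrad z (hne0 z hzS)
    have hznorm : β * δ ≤ ‖z‖ := (memfact z hzS).1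
    have hzpos : 0 < ‖z‖ := lt_of_lt_of_le hIpos hznorm
    have h2 : ‖fderiv ℝ (gauge K) z‖ ≤ τ * gauge K z / ‖z‖ := by
      rw [le_div_iff₀ hzpos]; exact h1
    refine h2.trans ?_
    rw [hC]
    exact div_le_div₀ (mul_nonneg hτ.le hMnonneg)
      (mul_le_mul_of_nonneg_left (hw hzS) hτ.le) hIpos hznorm
  -- MVT on the segment
  have hlip : ∀ z ∈ S, |gauge K z - gauge K z₀| ≤ τ * M / β := by
    intro z hzS
    have h1 : ‖gauge K z - gauge K z₀‖ ≤ C * ‖z - z₀‖ :=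
      (convex_segment z₀ z₁).norm_image_sub_le_of_norm_fderiv_le hdiffS hbound
        (left_mem_segment ℝ _ _) hzS
    rw [Real.norm_eq_abs] at h1
    refine h1.trans ?_
    have h2 : C * ‖z - z₀‖ ≤ C * δ :=
      mul_le_mul_of_nonneg_left (memfact z hzS).2 hCnonneg
    refine h2.trans_eq ?_
    rw [hC]
    field_simp
  -- M ≤ 2 * gauge K z₀
  have hg0 : 0 < gauge K z₀ := by
    have habs : Absorbent ℝ K := absorbent_nhds_zero (mem_interior_iff_mem_nhds.mp hK0)
    have hvnb : Bornology.IsVonNBounded ℝ K := NormedSpace.isVonNBounded_of_isBounded ℝ hKbd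
    exact (gauge_pos habs hvnb).mpr (hne0 z₀ (left_mem_segment ℝ _ _))
  have hMle : M ≤ 2 * gauge K z₀ := by
    have h1 := hlip w hwS
    have h2 : M - gauge K z₀ ≤ τ * M / β := (le_abs_self _).trans h1
    have h3 : τ * M / β ≤ M / 2 := by
      rw [div_le_div_iff₀ hβpos (by norm_num : (0:ℝ) < 2)]
      nlinarith
    linarith
  -- conclude
  have hfinal : |gauge K z₁ - gauge K z₀| ≤ 2 * τ / β * gauge K z₀ := by
    have h1 := hlip z₁ (right_mem_segment ℝ _ _)
    refine h1.trans ?_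
    rw [div_mul_eq_mul_div, div_le_div_iff₀ hβpos hβpos]
    nlinarith [mul_le_mul_of_nonneg_left hMle (mul_pos hτ hβpos).le]
  rw [div_le_iff₀ hg0]
  exact hfinal
end

section
/- Let K ⊂ ℝ^d be a closed convex body containing the origin in its interior that is centrally γ-fat, and let f_p be the scaling distance function with site p ∈ ℝ^d and unit ball K, assumed differentiable at every x ≠ p. Then for all x ≠ p, ‖∇f_p(x)‖ · ‖x − p‖ ≤ f_p(x) / γ. -/
open Metric

/-- `K` is centrally `γ`-fat: it is sandwiched between two Euclidean balls centered at the
origin whose radii are within a factor `γ` of each other. -/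
def CentrallyFat {d : ℕ} (γ : ℝ) (K : Set (EuclideanSpace ℝ (Fin d))) : Prop :=
  ∃ r R : ℝ, 0 < r ∧ closedBall 0 r ⊆ K ∧ K ⊆ closedBall 0 R ∧ γ ≤ r / R

/-- First half of Lemma 6.2 of the paper: if the unit ball `K` of the scaling distance
function `f_p = gauge K (· - p)` is centrally `γ`-fat, then at every point `x ≠ p` of
differentiability, `‖∇f_p(x)‖ · ‖x − p‖ ≤ f_p(x) / γ`. -/
theorem stmt5
    {d : ℕ} (K : Set (EuclideanSpace ℝ (Fin d)))
    (hKconv : Convex ℝ K) (hKcl : IsClosed K) (hKbd : Bornology.IsBounded K)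
    (hK0 : (0 : EuclideanSpace ℝ (Fin d)) ∈ interior K)
    (γ : ℝ) (hγ0 : 0 < γ) (hγ1 : γ ≤ 1) (hfat : CentrallyFat γ K)
    (p : EuclideanSpace ℝ (Fin d))
    (hdiff : ∀ x, x ≠ p → DifferentiableAt ℝ (fun y => gauge K (y - p)) x) :
    ∀ x, x ≠ p →
      ‖gradient (fun y => gauge K (y - p)) x‖ * ‖x - p‖ ≤ gauge K (x - p) / γ := by
  obtain ⟨r, R, hr, hrK, hKR, hγrR⟩ := hfat
  intro x hx
  have hR : 0 < R := by
    by_contra h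
    push_neg at h
    have : r / R ≤ 0 := div_nonpos_of_nonneg_of_nonpos hr.le h
    linarith
  -- Lipschitz bound on gauge
  have hball : Metric.ball (0 : EuclideanSpace ℝ (Fin d)) r ⊆ K :=
    (ball_subset_closedBall).trans hrK
  have hlipg : LipschitzWith ⟨r, hr.le⟩⁻¹ (gauge K) :=
    hKconv.lipschitzWith_gauge (by exact_mod_cast hr) hball
  have hlipf : LipschitzWith (⟨r, hr.le⟩⁻¹ * 1) (fun y : EuclideanSpace ℝ (Fin d) => gauge K (y - p)) :=
    hlipg.comp (LipschitzWith.of_dist_le_mul fun a b => by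
      simp [dist_eq_norm, sub_sub_sub_cancel_right])
  -- gradient norm = fderiv norm
  have hgrad : ‖gradient (fun y => gauge K (y - p)) x‖
      = ‖fderiv ℝ (fun y => gauge K (y - p)) x‖ := by
    rw [gradient, LinearIsometryEquiv.norm_map]
  have hfd : ‖fderiv ℝ (fun y => gauge K (y - p)) x‖ ≤ (⟨r, hr.le⟩⁻¹ * 1 : NNReal) :=
    norm_fderiv_le_of_lipschitz ℝ hlipf
  have h1 : ‖gradient (fun y => gauge K (y - p)) x‖ ≤ r⁻¹ := by
    rw [hgrad]
    simp only [mul_one, NNReal.coe_inv] at hfd; exact hfd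
  -- lower bound on gauge
  have h2 : ‖x - p‖ / R ≤ gauge K (x - p) := by
    have habs : Absorbent ℝ K :=
      absorbent_nhds_zero (mem_interior_iff_mem_nhds.mp hK0)
    calc ‖x - p‖ / R = gauge (closedBall (0 : EuclideanSpace ℝ (Fin d)) R) (x - p) :=
          (gauge_closedBall hR.le _).symm
      _ ≤ gauge K (x - p) := gauge_mono habs hKR _
  have hγR : R / r ≤ 1 / γ := by
    rw [div_le_div_iff₀ hr hγ0]
    have := (div_le_iff₀ hR).mp (le_of_eq rfl : r / R ≤ r / R)
    nlinarith [(le_div_iff₀ hR).mp hγrR]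
  calc ‖gradient (fun y => gauge K (y - p)) x‖ * ‖x - p‖
      ≤ r⁻¹ * ‖x - p‖ := by
        exact mul_le_mul_of_nonneg_right h1 (norm_nonneg _)
    _ ≤ r⁻¹ * (R * gauge K (x - p)) := by
        apply mul_le_mul_of_nonneg_left _ (inv_nonneg.mpr hr.le)
        rw [mul_comm]
        exact (div_le_iff₀ hR).mp h2
    _ = (R / r) * gauge K (x - p) := by ring
    _ ≤ (1 / γ) * gauge K (x - p) := by
        apply mul_le_mul_of_nonneg_right hγR
        exact le_trans (by positivity) h2
    _ = gauge K (x - p) / γ := by ring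
end

section
/- For any real c ≥ 1 and any p ∈ ℝ^d, the distance function f_p(x) = ‖x − p‖^c (Euclidean norm raised to the power c) is c-admissible on ℝ^d \ {p}: for all x ≠ p, ‖∇f_p(x)‖·‖x − p‖ ≤ c·f_p(x) and ‖∇²f_p(x)‖·‖x − p‖² ≤ c²·f_p(x). -/
open Real

lemma aux_norm_rpow_hasFDerivAt {E : Type*} [NormedAddCommGroup E] [InnerProductSpace ℝ E]
    (a : ℝ) {x : E} (hx : x ≠ 0) :
    HasFDerivAt (fun y : E => ‖y‖ ^ a) ((a * ‖x‖ ^ (a - 2)) • innerSL ℝ x) x := by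
  have h0 : (0:ℝ) < ‖x‖ := norm_pos_iff.mpr hx
  have h2 : (‖x‖ : ℝ) ^ (2:ℕ) ≠ 0 := by positivity
  have h := ((hasStrictFDerivAt_norm_sq x).hasFDerivAt).rpow_const (p := a / 2) (Or.inl h2)
  have heq : (fun y : E => (‖y‖ ^ 2 : ℝ) ^ (a / 2)) = fun y : E => ‖y‖ ^ a := by
    funext y
    rw [← Real.rpow_natCast ‖y‖ 2, ← Real.rpow_mul (norm_nonneg _)]
    congr 1
    ring
  rw [heq] at h
  convert h using 1
  have hb : ((‖x‖ ^ 2 : ℝ)) ^ (a / 2 - 1) = ‖x‖ ^ (a - 2) := by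
    rw [← Real.rpow_natCast ‖x‖ 2, ← Real.rpow_mul (norm_nonneg _)]
    norm_num [mul_sub]
    ring_nf
  ext y
  simp only [ContinuousLinearMap.smul_apply, hb, smul_eq_mul, two_smul,
    ContinuousLinearMap.add_apply]
  ring

lemma aux_sub_hasFDerivAt {E : Type*} [NormedAddCommGroup E] [InnerProductSpace ℝ E]
    (a : ℝ) {x p : E} (hx : x ≠ p) :
    HasFDerivAt (fun y : E => ‖y - p‖ ^ a)
      ((a * ‖x - p‖ ^ (a - 2)) • innerSL ℝ (x - p)) x := by
  have h := (aux_norm_rpow_hasFDerivAt a (sub_ne_zero.mpr hx)).comp x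
    ((hasFDerivAt_id x).sub_const p)
  simp only [ContinuousLinearMap.comp_id] at h
  exact h

/-- The distance function `f_p(x) = ‖x − p‖^c` (Euclidean norm to the real power `c ≥ 1`)
is `c`-admissible away from its site `p`: for all `x ≠ p`,
`‖∇f_p(x)‖·‖x − p‖ ≤ c·f_p(x)` and `‖∇²f_p(x)‖·‖x − p‖² ≤ c²·f_p(x)`. -/
theorem stmt9
    {d : ℕ} (c : ℝ) (hc : 1 ≤ c) (p : EuclideanSpace ℝ (Fin d)) :
    ∀ x, x ≠ p →
      ‖gradient (fun y : EuclideanSpace ℝ (Fin d) => ‖y - p‖ ^ c) x‖ * ‖x - p‖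
          ≤ c * ‖x - p‖ ^ c ∧
      ‖fderiv ℝ (gradient (fun y : EuclideanSpace ℝ (Fin d) => ‖y - p‖ ^ c)) x‖ * ‖x - p‖ ^ 2
          ≤ c ^ 2 * ‖x - p‖ ^ c := by
  have hgrad : ∀ z : EuclideanSpace ℝ (Fin d), z ≠ p →
      HasGradientAt (fun y : EuclideanSpace ℝ (Fin d) => ‖y - p‖ ^ c)
        ((c * ‖z - p‖ ^ (c - 2)) • (z - p)) z := by
    intro z hz
    rw [hasGradientAt_iff_hasFDerivAt]
    convert aux_sub_hasFDerivAt c hz using 1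
    · rfl
    ext y
    simp [InnerProductSpace.toDual_apply_apply, real_inner_smul_left]
  have hgrad_eq : ∀ z : EuclideanSpace ℝ (Fin d), z ≠ p →
      gradient (fun y : EuclideanSpace ℝ (Fin d) => ‖y - p‖ ^ c) z
        = (c * ‖z - p‖ ^ (c - 2)) • (z - p) :=
    fun z hz => (hgrad z hz).gradient
  intro x hx
  have hr : (0:ℝ) < ‖x - p‖ := by
    rw [norm_pos_iff, sub_ne_zero]; exact hx
  set r : ℝ := ‖x - p‖ with hrdef
  have hrc : r ^ (c - 2) * r ^ (2:ℕ) = r ^ c := by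
    rw [← Real.rpow_natCast r 2, ← Real.rpow_add hr]
    norm_num
  clear_value r
  constructor
  · rw [hgrad_eq x hx, norm_smul, Real.norm_eq_abs, ← hrdef]
    have habs : |c * r ^ (c - 2)| = c * r ^ (c - 2) := by
      rw [abs_of_nonneg]; positivity
    rw [habs]
    calc c * r ^ (c - 2) * r * r = c * (r ^ (c-2) * r ^ (2:ℕ)) := by
          push_cast; ring
      _ = c * r ^ c := by rw [hrc]
      _ ≤ c * r ^ c := le_rfl
  · -- second derivative
    set D : EuclideanSpace ℝ (Fin d) →L[ℝ] EuclideanSpace ℝ (Fin d) :=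
      (c * r ^ (c - 2)) • ContinuousLinearMap.id ℝ (EuclideanSpace ℝ (Fin d))
        + ((c * (c - 2) * r ^ (c - 4)) • innerSL ℝ (x - p)).smulRight (x - p) with hD
    have hφ : HasFDerivAt (fun y : EuclideanSpace ℝ (Fin d) => c * ‖y - p‖ ^ (c - 2))
        ((c * (c - 2) * r ^ (c - 4)) • innerSL ℝ (x - p)) x := by
      have h := (aux_sub_hasFDerivAt (c - 2) hx).const_mul c
      rw [show c - 2 - 2 = c - 4 by ring] at h
      convert h using 1
      · rfl
      · rfl
      · rfl
      rw [smul_smul, ← hrdef]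
      ring_nf
    have hsub : HasFDerivAt (fun y : EuclideanSpace ℝ (Fin d) => y - p)
        (ContinuousLinearMap.id ℝ (EuclideanSpace ℝ (Fin d))) x :=
      (hasFDerivAt_id x).sub_const p
    have hgD : HasFDerivAt
        (fun y : EuclideanSpace ℝ (Fin d) => (c * ‖y - p‖ ^ (c - 2)) • (y - p)) D x := by
      have h := hφ.smul hsub
      rwa [← hrdef] at h
    have hev : gradient (fun y : EuclideanSpace ℝ (Fin d) => ‖y - p‖ ^ c) =ᶠ[nhds x]
        (fun y : EuclideanSpace ℝ (Fin d) => (c * ‖y - p‖ ^ (c - 2)) • (y - p)) := by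
      filter_upwards [eventually_ne_nhds hx] with y hy
      exact hgrad_eq y hy
    have hfd_eq : fderiv ℝ (gradient (fun y : EuclideanSpace ℝ (Fin d) => ‖y - p‖ ^ c)) x
        = D := by
      rw [hev.fderiv_eq, hgD.fderiv]
    rw [hfd_eq]
    clear_value D
    have hs : (0:ℝ) < r ^ (c - 4) := by positivity
    set s : ℝ := r ^ (c - 4) with hsdef
    have hs2 : r ^ (c - 2) = s * r ^ (2:ℕ) := by
      rw [hsdef, ← Real.rpow_natCast r 2, ← Real.rpow_add hr]
      norm_num
      congr 1
      ring
    clear_value s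
    have hbound : ∀ v : EuclideanSpace ℝ (Fin d), ‖D v‖ ≤ (c ^ 2 * r ^ (c - 2)) * ‖v‖ := by
      intro v
      have hDv : D v = (c * r ^ (c - 2)) • v
          + (c * (c - 2) * s * (inner ℝ (x - p) v : ℝ)) • (x - p) := by
        rw [hD]
        simp only [ContinuousLinearMap.add_apply, ContinuousLinearMap.smul_apply,
          ContinuousLinearMap.id_apply, ContinuousLinearMap.smulRight_apply,
          innerSL_apply_apply, smul_eq_mul]
      obtain ⟨t, ht⟩ : ∃ t : ℝ, (inner ℝ (x - p) v : ℝ) = t := ⟨_, rfl⟩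
      rw [ht] at hDv
      have hcomm : (inner ℝ v (x - p) : ℝ) = t := by rw [← ht]; exact (real_inner_comm v (x - p)).symm
      have hts : t ^ 2 ≤ r ^ 2 * ‖v‖ ^ 2 := by
        have h1 := abs_real_inner_le_norm (x - p) v
        rw [ht, ← hrdef] at h1
        have h2 : t ^ 2 ≤ (r * ‖v‖) ^ 2 := by
          rw [← sq_abs t]
          exact pow_le_pow_left₀ (abs_nonneg _) h1 2
        linarith [h2]
      have hsq : ‖D v‖ ^ 2 ≤ ((c ^ 2 * r ^ (c - 2)) * ‖v‖) ^ 2 := by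
        rw [hDv, norm_add_sq_real, norm_smul, norm_smul, real_inner_smul_left,
          real_inner_smul_right, hcomm]
        simp only [Real.norm_eq_abs]
        rw [← hrdef, mul_pow, mul_pow, sq_abs, sq_abs, hs2]
        have h1 : r^2*‖v‖^2 + (2*(c-2)+(c-2)^2)*t^2 ≤ c^2*(r^2*‖v‖^2) := by
          rcases le_total c 2 with h | h
          · nlinarith [sq_nonneg t, sq_nonneg (r*‖v‖), sq_nonneg (c-1)]
          · nlinarith [hts, sq_nonneg (c-1)]
        have h2 := mul_le_mul_of_nonneg_left h1
          (show (0:ℝ) ≤ c^2*s^2*r^2 by positivity)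
        linarith [h2]
      have hpos : 0 ≤ (c ^ 2 * r ^ (c - 2)) * ‖v‖ := by positivity
      nlinarith [norm_nonneg (D v), hsq, hpos]
    have hop : ‖D‖ ≤ c ^ 2 * r ^ (c - 2) :=
      ContinuousLinearMap.opNorm_le_bound _ (by positivity) hbound
    calc ‖D‖ * r ^ 2 ≤ (c ^ 2 * r ^ (c - 2)) * r ^ (2:ℕ) :=
          mul_le_mul_of_nonneg_right hop (by positivity)
      _ = c ^ 2 * r ^ c := by rw [mul_assoc, hrc]
      _ ≤ c ^ 2 * r ^ c := le_rfl
end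

section
/- Any μ-similar Bregman divergence over an open convex domain 𝒳 ⊆ ℝ^d is 2μ-admissible: for all q, p ∈ 𝒳, ‖∇F(q) − ∇F(p)‖·‖q − p‖ ≤ 2μ·D_F(q, p) and ‖∇²F(q)‖·‖q − p‖² ≤ (2μ)²·D_F(q, p). -/
open scoped RealInnerProductSpace

/-- The Bregman divergence of `F`: `D_F(q, p) = F(q) − F(p) − ⟨∇F(p), q − p⟩`. -/
noncomputable def breg {d : ℕ} (F : EuclideanSpace ℝ (Fin d) → ℝ)
    (q p : EuclideanSpace ℝ (Fin d)) : ℝ :=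
  F q - F p - ⟪gradient F p, q - p⟫

open InnerProductSpace Filter Topology

set_option maxHeartbeats 1000000

/-- Lemma 6.8(i) of the paper: any `μ`-similar Bregman divergence is `2μ`-admissible,
i.e. `‖∇_q D_F(q,p)‖·‖q−p‖ ≤ 2μ·D_F(q,p)` and `‖∇²_q D_F(q,p)‖·‖q−p‖² ≤ (2μ)²·D_F(q,p)`,
where `∇_q D_F(q,p) = ∇F(q) − ∇F(p)` and `∇²_q D_F(q,p) = ∇²F(q)`. -/
theorem stmt15
    {d : ℕ} (𝒳 : Set (EuclideanSpace ℝ (Fin d)))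
    (hopen : IsOpen 𝒳) (hconv : Convex ℝ 𝒳)
    (F : EuclideanSpace ℝ (Fin d) → ℝ)
    (hsc : StrictConvexOn ℝ 𝒳 F) (hF : ContDiffOn ℝ 2 F 𝒳)
    (μ : ℝ) (hμ : 1 ≤ μ)
    (hsim : ∀ p ∈ 𝒳, ∀ q ∈ 𝒳, ‖q - p‖ ^ 2 ≤ breg F q p ∧ breg F q p ≤ μ * ‖q - p‖ ^ 2) :
    ∀ q ∈ 𝒳, ∀ p ∈ 𝒳,
      ‖gradient F q - gradient F p‖ * ‖q - p‖ ≤ 2 * μ * breg F q p ∧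
      ‖fderiv ℝ (gradient F) q‖ * ‖q - p‖ ^ 2 ≤ (2 * μ) ^ 2 * breg F q p := by
  let e : StrongDual ℝ (EuclideanSpace ℝ (Fin d)) ≃ₗᵢ[ℝ] EuclideanSpace ℝ (Fin d) :=
    (toDual ℝ (EuclideanSpace ℝ (Fin d))).symm
  have hgrad : gradient F = ⇑e ∘ fderiv ℝ F := rfl
  -- differentiability of `fderiv ℝ F` and `gradient F` on `𝒳`
  have hd1 : ∀ y ∈ 𝒳, DifferentiableAt ℝ (fderiv ℝ F) y := fun y hy =>
    (((hF.contDiffAt (hopen.mem_nhds hy)).fderiv_right (m := 1) le_rfl)).differentiableAt one_ne_zero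
  have hdg : ∀ y ∈ 𝒳, DifferentiableAt ℝ (gradient F) y := by
    intro y hy
    rw [hgrad]
    exact (e.toContinuousLinearEquiv.differentiableAt).comp y (hd1 y hy)
  -- the key bound on the Hessian norm
  have key : ∀ x ∈ 𝒳, ‖fderiv ℝ (gradient F) x‖ ≤ 2 * μ := by
    intro x hx
    set A := fderiv ℝ (gradient F) x with hA
    set f'' := fderiv ℝ (fderiv ℝ F) x with hf''
    have hAe : A = (e.toContinuousLinearEquiv : StrongDual ℝ (EuclideanSpace ℝ (Fin d)) →L[ℝ] EuclideanSpace ℝ (Fin d)).comp f'' := by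
      rw [hA, hgrad]
      exact e.comp_fderiv
    have hAvw : ∀ v w : EuclideanSpace ℝ (Fin d), ⟪A v, w⟫ = f'' v w := by
      intro v w
      rw [hAe]
      exact toDual_symm_apply
    have hsymm : ∀ v w : EuclideanSpace ℝ (Fin d), f'' v w = f'' w v :=
      ((hF.contDiffAt (hopen.mem_nhds hx)).isSymmSndFDerivAt (by simp))
    -- quadratic form bounds via one-dimensional limits
    have hQ : ∀ v : EuclideanSpace ℝ (Fin d), 0 ≤ ⟪A v, v⟫ ∧ ⟪A v, v⟫ ≤ 2 * μ * ‖v‖ ^ 2 := by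
      intro v
      -- the derivative of `t ↦ gradient F (x + t • v)` at `0` is `A v`
      have h1 : HasDerivAt (fun t : ℝ => x + t • v) v 0 := by
        simpa using ((hasDerivAt_id (0 : ℝ)).smul_const v).const_add x
      have h2 : HasFDerivAt (gradient F) A (x + (0 : ℝ) • v) := by
        simpa using (hdg x hx).hasFDerivAt
      have h3 : HasDerivAt (fun t : ℝ => gradient F (x + t • v)) (A v) 0 :=
        h2.comp_hasDerivAt (l := gradient F) (l' := A) 0 h1
      have h4 : Tendsto (slope (fun t : ℝ => gradient F (x + t • v)) 0) (𝓝[≠] (0 : ℝ))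
          (𝓝 (A v)) := hasDerivAt_iff_tendsto_slope.mp h3
      have h5 : Tendsto (fun t : ℝ => ⟪slope (fun s : ℝ => gradient F (x + s • v)) 0 t, v⟫)
          (𝓝[>] (0 : ℝ)) (𝓝 ⟪A v, v⟫) := by
        refine (h4.inner tendsto_const_nhds).mono_left (nhdsWithin_mono _ ?_)
        intro t ht
        exact ne_of_gt ht
      -- eventually `x + t • v ∈ 𝒳`
      have hcont : Continuous fun t : ℝ => x + t • v :=
        continuous_const.add (continuous_id.smul continuous_const)
      have hmem : ∀ᶠ t in 𝓝[>] (0 : ℝ), x + t • v ∈ 𝒳 := by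
        have : ∀ᶠ t in 𝓝 (0 : ℝ), x + t • v ∈ 𝒳 := by
          have h0 : 𝒳 ∈ 𝓝 (x + (0 : ℝ) • v) := by simpa using hopen.mem_nhds hx
          exact hcont.continuousAt.preimage_mem_nhds h0
        exact this.filter_mono nhdsWithin_le_nhds
      -- pointwise bounds for the slopes
      have hlow : ∀ᶠ t in 𝓝[>] (0 : ℝ),
          2 * ‖v‖ ^ 2 ≤ ⟪slope (fun s : ℝ => gradient F (x + s • v)) 0 t, v⟫ ∧
          ⟪slope (fun s : ℝ => gradient F (x + s • v)) 0 t, v⟫ ≤ 2 * μ * ‖v‖ ^ 2 := by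
        filter_upwards [hmem, self_mem_nhdsWithin] with t hqmem ht
        have ht0 : (0 : ℝ) < t := ht
        set q := x + t • v with hqdef
        have hqx : q - x = t • v := by simp [hqdef]
        -- the sum of the two Bregman divergences
        have hsum : ⟪gradient F q - gradient F x, q - x⟫ = breg F q x + breg F x q := by
          simp only [breg, inner_sub_left, inner_sub_right]
          have h1 : ⟪gradient F x, x - q⟫ = ⟪gradient F x, x⟫ - ⟪gradient F x, q⟫ :=
            inner_sub_right _ _ _
          have h2 : ⟪gradient F q, x - q⟫ = ⟪gradient F q, x⟫ - ⟪gradient F q, q⟫ :=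
            inner_sub_right _ _ _
          ring_nf
        have hs1 := hsim x hx q hqmem
        have hs2 := hsim q hqmem x hx
        have hnorm : ‖q - x‖ ^ 2 = t ^ 2 * ‖v‖ ^ 2 := by
          rw [hqx, norm_smul]
          simp [abs_of_pos ht0]
          ring
        have hnorm' : ‖x - q‖ ^ 2 = t ^ 2 * ‖v‖ ^ 2 := by
          rw [norm_sub_rev]; exact hnorm
        have hSbound : 2 * (t ^ 2 * ‖v‖ ^ 2) ≤ ⟪gradient F q - gradient F x, q - x⟫ ∧
            ⟪gradient F q - gradient F x, q - x⟫ ≤ 2 * μ * (t ^ 2 * ‖v‖ ^ 2) := by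
          constructor
          · rw [hsum]
            have h1 := hs1.1; rw [hnorm] at h1
            have h2 := hs2.1; rw [hnorm'] at h2
            linarith
          · rw [hsum]
            have h1 := hs1.2; rw [hnorm] at h1
            have h2 := hs2.2; rw [hnorm'] at h2
            linarith
        -- rewrite the slope
        have hslope : ⟪slope (fun s : ℝ => gradient F (x + s • v)) 0 t, v⟫ =
            ⟪gradient F q - gradient F x, q - x⟫ / t ^ 2 := by
          rw [slope_def_module]
          simp only [sub_zero]
          rw [inner_smul_left]
          have : gradient F (x + (0 : ℝ) • v) = gradient F x := by norm_num
          rw [this, hqx, real_inner_smul_right]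
          simp only [conj_trivial]
          field_simp
          ring
        rw [hslope]
        constructor
        · rw [le_div_iff₀ (by positivity)]
          nlinarith [hSbound.1]
        · rw [div_le_iff₀ (by positivity)]
          nlinarith [hSbound.2]
      constructor
      · have h6 : (2 : ℝ) * ‖v‖ ^ 2 ≤ ⟪A v, v⟫ :=
          ge_of_tendsto h5 (hlow.mono fun t ht => ht.1)
        nlinarith [sq_nonneg ‖v‖]
      · exact le_of_tendsto h5 (hlow.mono fun t ht => ht.2)
    -- the bilinear form of `A` is symmetric
    have hAsymm : ∀ v w : EuclideanSpace ℝ (Fin d), ⟪A v, w⟫ = ⟪A w, v⟫ := by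
      intro v w
      rw [hAvw, hAvw, hsymm]
    -- Cauchy–Schwarz for the quadratic form
    have hCS : ∀ v w : EuclideanSpace ℝ (Fin d), ⟪A v, w⟫ ≤ 2 * μ * (‖v‖ * ‖w‖) := by
      intro v w
      have hquad : ∀ t : ℝ, 0 ≤ ⟪A w, w⟫ * (t * t) + (2 * ⟪A v, w⟫) * t + ⟪A v, v⟫ := by
        intro t
        have h0 := (hQ (v + t • w)).1
        have hexp : ⟪A (v + t • w), v + t • w⟫ =
            ⟪A w, w⟫ * (t * t) + (2 * ⟪A v, w⟫) * t + ⟪A v, v⟫ := by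
          rw [map_add, map_smul]
          rw [inner_add_left, inner_add_right, inner_add_right]
          rw [real_inner_smul_left, real_inner_smul_right, real_inner_smul_left,
            real_inner_smul_right]
          rw [hAsymm w v]
          ring
        linarith [hexp ▸ h0]
      have hd := discrim_le_zero hquad
      rw [discrim] at hd
      have hQv := (hQ v).2
      have hQw := (hQ w).2
      have hQv0 := (hQ v).1
      have hQw0 := (hQ w).1
      have hsq : ⟪A v, w⟫ ^ 2 ≤ ⟪A v, v⟫ * ⟪A w, w⟫ := by nlinarith
      have hbound : ⟪A v, w⟫ ^ 2 ≤ (2 * μ * (‖v‖ * ‖w‖)) ^ 2 := by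
        have := mul_le_mul hQv hQw hQw0 (by nlinarith [sq_nonneg ‖v‖, norm_nonneg v] :
          (0:ℝ) ≤ 2 * μ * ‖v‖ ^ 2)
        nlinarith [sq_nonneg ‖v‖, sq_nonneg ‖w‖]
      have hK : (0:ℝ) ≤ 2 * μ * (‖v‖ * ‖w‖) :=
        mul_nonneg (by linarith) (mul_nonneg (norm_nonneg v) (norm_nonneg w))
      nlinarith [hbound, hK]
    -- conclude the operator norm bound
    refine A.opNorm_le_bound (by linarith) ?_
    intro v
    rcases eq_or_lt_of_le (norm_nonneg (A v)) with h0 | h0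
    · rw [← h0]; positivity
    · have h1 := hCS v (A v)
      rw [real_inner_self_eq_norm_mul_norm] at h1
      have : ‖A v‖ * ‖A v‖ ≤ 2 * μ * ‖v‖ * ‖A v‖ := by
        calc ‖A v‖ * ‖A v‖ = ⟪A v, A v⟫ := (real_inner_self_eq_norm_mul_norm _).symm
          _ ≤ 2 * μ * (‖v‖ * ‖A v‖) := hCS v (A v)
          _ = 2 * μ * ‖v‖ * ‖A v‖ := by ring
      exact le_of_mul_le_mul_right this h0
  -- main conclusion
  intro q hq p hp
  have hb := hsim p hp q hq
  have hb0 : 0 ≤ breg F q p := le_trans (by positivity) hb.1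
  constructor
  · have hlip : ‖gradient F q - gradient F p‖ ≤ 2 * μ * ‖q - p‖ :=
      hconv.norm_image_sub_le_of_norm_fderiv_le hdg key hp hq
    have h2 : ‖q - p‖ ^ 2 ≤ breg F q p := hb.1
    nlinarith [norm_nonneg (q - p), mul_le_mul_of_nonneg_right hlip (norm_nonneg (q - p))]
  · have hk := key q hq
    have h2 : ‖q - p‖ ^ 2 ≤ breg F q p := hb.1
    have hAnn : (0:ℝ) ≤ ‖fderiv ℝ (gradient F) q‖ := norm_nonneg _
    nlinarith [mul_le_mul_of_nonneg_right hk (sq_nonneg ‖q - p‖), sq_nonneg ‖q - p‖]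
end

section
/- Any τ-admissible Bregman divergence D_F over an open convex domain 𝒳 ⊆ ℝ^d with τ ≥ 1 is (τ − 1)-asymmetric: for all p, q ∈ 𝒳, D_F(p, q) ≤ (τ − 1)·D_F(q, p). -/
open scoped RealInnerProductSpace

/-- Any `τ`-admissible Bregman divergence with `τ ≥ 1` is `(τ−1)`-asymmetric:
`D_F(p,q) ≤ (τ−1)·D_F(q,p)` for all `p, q ∈ 𝒳`. (Here admissibility is
`‖∇F(q)−∇F(p)‖·‖q−p‖ ≤ τ·D_F(q,p)` and `‖∇²F(q)‖·‖q−p‖² ≤ τ²·D_F(q,p)`.) -/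
theorem stmt18
    {d : ℕ} (𝒳 : Set (EuclideanSpace ℝ (Fin d)))
    (hopen : IsOpen 𝒳) (hconv : Convex ℝ 𝒳)
    (F : EuclideanSpace ℝ (Fin d) → ℝ)
    (hsc : StrictConvexOn ℝ 𝒳 F) (hF : ContDiffOn ℝ 2 F 𝒳)
    (τ : ℝ) (hτ : 1 ≤ τ)
    (hadm : ∀ q ∈ 𝒳, ∀ p ∈ 𝒳,
      ‖gradient F q - gradient F p‖ * ‖q - p‖ ≤ τ * breg F q p ∧
      ‖fderiv ℝ (gradient F) q‖ * ‖q - p‖ ^ 2 ≤ τ ^ 2 * breg F q p) :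
    ∀ p ∈ 𝒳, ∀ q ∈ 𝒳, breg F p q ≤ (τ - 1) * breg F q p := by
  intro p hp q hq
  have h1 := (hadm q hq p hp).1
  have key : breg F p q + breg F q p = ⟪gradient F q - gradient F p, q - p⟫ := by
    have hpq : p - q = -(q - p) := by abel
    simp only [breg, inner_sub_left, hpq, inner_neg_right]
    ring
  have cs : ⟪gradient F q - gradient F p, q - p⟫ ≤
      ‖gradient F q - gradient F p‖ * ‖q - p‖ := real_inner_le_norm _ _
  linarith
end

section
/- Let D be a τ-admissible Bregman divergence (τ ≥ 1) over an open convex domain 𝒳 ⊆ ℝ^d, let 0 < ε ≤ 1, and let β ≥ 4τ²/ε. Let B_w ⊂ 𝒳 be a Euclidean ball and q ∈ 𝒳 a point with dist(q, B_w) ≥ β·diam(B_w). Then for any points p, p′ ∈ B_w: |D(q, p) − D(q, p′)| ≤ ε·D(q, p). -/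
open Metric
open scoped RealInnerProductSpace

set_option maxHeartbeats 1000000 in
/-- Lemma 5.3 of the paper: let `D` be a `τ`-admissible Bregman divergence (`τ ≥ 1`) over
an open convex domain `𝒳`, `0 < ε ≤ 1`, and `β ≥ 4τ²/ε`. If `B_w ⊆ 𝒳` is a Euclidean
ball and `q ∈ 𝒳` satisfies `dist(q, B_w) ≥ β·diam(B_w)`, then for any `p, p' ∈ B_w`,
`|D(q,p) − D(q,p')| ≤ ε·D(q,p)`. -/
theorem stmt19
    {d : ℕ} (𝒳 : Set (EuclideanSpace ℝ (Fin d)))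
    (hopen : IsOpen 𝒳) (hconv : Convex ℝ 𝒳)
    (F : EuclideanSpace ℝ (Fin d) → ℝ)
    (hsc : StrictConvexOn ℝ 𝒳 F) (hF : ContDiffOn ℝ 2 F 𝒳)
    (τ : ℝ) (hτ : 1 ≤ τ)
    (hadm : ∀ q ∈ 𝒳, ∀ p ∈ 𝒳,
      ‖gradient F q - gradient F p‖ * ‖q - p‖ ≤ τ * breg F q p ∧
      ‖fderiv ℝ (gradient F) q‖ * ‖q - p‖ ^ 2 ≤ τ ^ 2 * breg F q p)
    (ε : ℝ) (hε0 : 0 < ε) (hε1 : ε ≤ 1)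
    (β : ℝ) (hβ : 4 * τ ^ 2 / ε ≤ β)
    (c : EuclideanSpace ℝ (Fin d)) (r : ℝ) (hr : 0 < r)
    (hBw : closedBall c r ⊆ 𝒳)
    (q : EuclideanSpace ℝ (Fin d)) (hq : q ∈ 𝒳)
    (hsep : infDist q (closedBall c r) ≥ β * diam (closedBall c r)) :
    ∀ p ∈ closedBall c r, ∀ p' ∈ closedBall c r,
      |breg F q p - breg F q p'| ≤ ε * breg F q p := by
  classical
  have hτ0 : (0:ℝ) < τ := lt_of_lt_of_le one_pos hτ
  have hβ0 : (0:ℝ) < β := by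
    have h0 : (0:ℝ) < 4 * τ ^ 2 / ε := div_pos (by nlinarith) hε0
    linarith
  -- nonnegativity of the divergence
  have hnn : ∀ a ∈ 𝒳, ∀ b ∈ 𝒳, 0 ≤ breg F a b := by
    intro a ha b hb
    have h1 := (hadm a ha b hb).1
    nlinarith [mul_nonneg (norm_nonneg (gradient F a - gradient F b)) (norm_nonneg (a - b))]
  -- inner product with the gradient is the Fréchet derivative
  have hinner : ∀ (z : EuclideanSpace ℝ (Fin d)) (v : EuclideanSpace ℝ (Fin d)),
      ⟪gradient F z, v⟫ = fderiv ℝ F z v := by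
    intro z v
    simp [gradient, InnerProductSpace.toDual_symm_apply]
  -- differentiability of F
  have hFd : ∀ x ∈ 𝒳, HasFDerivAt F (fderiv ℝ F x) x := by
    intro x hx
    exact ((hF.contDiffAt (hopen.mem_nhds hx)).differentiableAt (by norm_num)).hasFDerivAt
  -- differentiability of the gradient
  have hGd : ∀ x ∈ 𝒳, HasFDerivAt (gradient F) (fderiv ℝ (gradient F) x) x := by
    intro x hx
    have h2 : ContDiffAt ℝ 1 (fderiv ℝ F) x :=
      (hF.contDiffAt (hopen.mem_nhds hx)).fderiv_right (le_refl 2)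
    have hdf : DifferentiableAt ℝ (fderiv ℝ F) x := h2.differentiableAt (by norm_num)
    have hdg : DifferentiableAt ℝ (gradient F) x := by
      have : gradient F = fun y =>
          (InnerProductSpace.toDual ℝ (EuclideanSpace ℝ (Fin d))).symm (fderiv ℝ F y) := rfl
      rw [this]
      exact ((InnerProductSpace.toDual ℝ
        (EuclideanSpace ℝ (Fin d))).symm.differentiable.differentiableAt).comp x hdf
    exact hdg.hasFDerivAt
  -- continuity of the gradient on 𝒳
  have hGc : ContinuousOn (gradient F) 𝒳 := by
    have h1 : ContinuousOn (fderiv ℝ F) 𝒳 :=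
      hF.continuousOn_fderiv_of_isOpen hopen (by norm_num)
    have : gradient F = fun y =>
        (InnerProductSpace.toDual ℝ (EuclideanSpace ℝ (Fin d))).symm (fderiv ℝ F y) := rfl
    rw [this]
    exact (InnerProductSpace.toDual ℝ
      (EuclideanSpace ℝ (Fin d))).symm.continuous.comp_continuousOn h1
  -- KEY LEMMA : ‖∇²F(x)‖ ‖q - x‖² ≤ 2 τ² D(q,x)
  have key : ∀ x ∈ 𝒳, ‖fderiv ℝ (gradient F) x‖ * ‖q - x‖ ^ 2 ≤ 2 * τ ^ 2 * breg F q x := by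
    intro x hx
    set u : EuclideanSpace ℝ (Fin d) := q - x with hu
    have hmem : ∀ t ∈ Set.Icc (0:ℝ) 1, x + t • u ∈ 𝒳 := by
      intro t ht
      exact hconv.add_smul_sub_mem hx hq ht
    have hm0 : x + (0:ℝ) • u = x := by simp
    have hm1 : x + (1:ℝ) • u = q := by simp [hu]
    -- the integrand
    have hW : ∀ t ∈ Set.uIcc (0:ℝ) 1,
        HasDerivAt (fun s : ℝ => F (x + s • u)) (⟪gradient F (x + t • u), u⟫) t := by
      intro t ht
      rw [Set.uIcc_of_le zero_le_one] at ht
      have hmt := hmem t ht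
      have hd1 : HasDerivAt (fun s : ℝ => x + s • u) u t := by
        simpa using ((hasDerivAt_id t).smul_const u).const_add x
      have h3 := (hFd _ hmt).comp_hasDerivAt t hd1
      rwa [← hinner] at h3
    have hWc : ContinuousOn (fun t : ℝ => ⟪gradient F (x + t • u), u⟫) (Set.uIcc (0:ℝ) 1) := by
      apply ContinuousOn.inner
      · apply hGc.comp
        · exact (continuous_const.add (continuous_id.smul continuous_const)).continuousOn
        · intro t ht
          rw [Set.uIcc_of_le zero_le_one] at ht
          exact hmem t ht
      · exact continuousOn_const
    have hint : IntervalIntegrable (fun t : ℝ => ⟪gradient F (x + t • u), u⟫)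
        MeasureTheory.volume 0 1 := hWc.intervalIntegrable
    have hFTC : ∫ t in (0:ℝ)..1, ⟪gradient F (x + t • u), u⟫ = F q - F x := by
      rw [intervalIntegral.integral_eq_sub_of_hasDerivAt hW hint, hm0, hm1]
    have hIdef : breg F q x = (F q - F x) - ⟪gradient F x, u⟫ := by
      simp [breg, hu]
    set I : ℝ := breg F q x with hI
    -- main estimate with slack
    have main : ∀ I', I < I' → ‖fderiv ℝ (gradient F) x‖ * ‖u‖ ^ 2 ≤ 2 * τ ^ 2 * I' := by
      intro I' hI'
      obtain ⟨t, ht01, hJt⟩ : ∃ t ∈ Set.Ioc (0:ℝ) 1,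
          ⟪gradient F (x + t • u) - gradient F x, u⟫ ≤ 2 * t * I' := by
        by_contra hcon
        push_neg at hcon
        have hint2 : IntervalIntegrable (fun t : ℝ => 2 * t * I') MeasureTheory.volume 0 1 := by
          have hc : Continuous (fun t : ℝ => 2 * t * I') :=
            (continuous_const.mul continuous_id).mul continuous_const
          exact hc.intervalIntegrable 0 1
        have hint3 : IntervalIntegrable
            (fun t : ℝ => ⟪gradient F (x + t • u), u⟫ - ⟪gradient F x, u⟫)
            MeasureTheory.volume 0 1 := hint.sub intervalIntegrable_const
        have hmono : (∫ t in (0:ℝ)..1, 2 * t * I')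
            ≤ ∫ t in (0:ℝ)..1, (⟪gradient F (x + t • u), u⟫ - ⟪gradient F x, u⟫) := by
          apply intervalIntegral.integral_mono_on zero_le_one hint2 hint3
          intro t ht
          rcases eq_or_lt_of_le ht.1 with h0 | h0
          · rw [← h0]
            simp
          · have h4 := hcon t ⟨h0, ht.2⟩
            rw [inner_sub_left] at h4
            linarith
        have hL : (∫ t in (0:ℝ)..1, 2 * t * I') = I' := by
          have : (fun t : ℝ => 2 * t * I') = fun t : ℝ => (2 * I') * t := by
            funext t; ring
          rw [this, intervalIntegral.integral_const_mul, integral_id]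
          ring
        have hR : (∫ t in (0:ℝ)..1, (⟪gradient F (x + t • u), u⟫ - ⟪gradient F x, u⟫)) = I := by
          rw [intervalIntegral.integral_sub hint intervalIntegrable_const, hFTC]
          simp [hIdef]
        rw [hL, hR] at hmono
        linarith
      have hmt : x + t • u ∈ 𝒳 := hmem t ⟨ht01.1.le, ht01.2⟩
      have h2 := (hadm x hx _ hmt).2
      have hxm : ‖x - (x + t • u)‖ = t * ‖u‖ := by
        have : x - (x + t • u) = -(t • u) := by abel
        rw [this, norm_neg, norm_smul, Real.norm_eq_abs, abs_of_pos ht01.1]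
      have hsym : breg F x (x + t • u) + breg F (x + t • u) x
          = t * ⟪gradient F (x + t • u) - gradient F x, u⟫ := by
        have e1 : x + t • u - x = t • u := by abel
        have e2 : x - (x + t • u) = -(t • u) := by abel
        simp only [breg, e1, e2, inner_neg_right, inner_sub_left, real_inner_smul_right]
        ring
      have hnn2 : 0 ≤ breg F (x + t • u) x := hnn _ hmt _ hx
      have hb : breg F x (x + t • u) ≤ t * (2 * t * I') := by
        have h5 : t * ⟪gradient F (x + t • u) - gradient F x, u⟫ ≤ t * (2 * t * I') :=
          mul_le_mul_of_nonneg_left hJt ht01.1.le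
        linarith
      rw [hxm] at h2
      have h6 : ‖fderiv ℝ (gradient F) x‖ * (t * ‖u‖) ^ 2 ≤ τ ^ 2 * (t * (2 * t * I')) := by
        calc ‖fderiv ℝ (gradient F) x‖ * (t * ‖u‖) ^ 2 ≤ τ ^ 2 * breg F x (x + t • u) := h2
          _ ≤ τ ^ 2 * (t * (2 * t * I')) := by
              apply mul_le_mul_of_nonneg_left hb (by positivity)
      have ht2 : (0:ℝ) < t ^ 2 := pow_pos ht01.1 2
      have h7 : ‖fderiv ℝ (gradient F) x‖ * ‖u‖ ^ 2 * t ^ 2 ≤ (2 * τ ^ 2 * I') * t ^ 2 := by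
        nlinarith [h6]
      exact le_of_mul_le_mul_right h7 ht2
    -- remove the slack
    show ‖fderiv ℝ (gradient F) x‖ * ‖u‖ ^ 2 ≤ 2 * τ ^ 2 * I
    by_contra hlt
    push_neg at hlt
    have hd : 0 < (‖fderiv ℝ (gradient F) x‖ * ‖u‖ ^ 2 - 2 * τ ^ 2 * I) / (4 * τ ^ 2) := by
      apply div_pos (by linarith) (by nlinarith)
    have h8 := main (I + (‖fderiv ℝ (gradient F) x‖ * ‖u‖ ^ 2 - 2 * τ ^ 2 * I) / (4 * τ ^ 2))
      (by linarith)
    have hτ2 : (0:ℝ) < τ ^ 2 := pow_pos hτ0 2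
    rw [mul_add] at h8
    have h9 : 2 * τ ^ 2 * ((‖fderiv ℝ (gradient F) x‖ * ‖u‖ ^ 2 - 2 * τ ^ 2 * I) / (4 * τ ^ 2))
        = (‖fderiv ℝ (gradient F) x‖ * ‖u‖ ^ 2 - 2 * τ ^ 2 * I) / 2 := by
      rw [← mul_div_assoc, div_eq_div_iff (by nlinarith : (0:ℝ) < 4 * τ ^ 2).ne'
        (two_ne_zero : (2:ℝ) ≠ 0)]
      ring
    rw [h9] at h8
    linarith
  -- the derivative of y ↦ breg F q y
  set B : Set (EuclideanSpace ℝ (Fin d)) := closedBall c r with hBdef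
  set DD : EuclideanSpace ℝ (Fin d) → (EuclideanSpace ℝ (Fin d) →L[ℝ] ℝ) := fun x =>
    -(fderiv ℝ F x + (fderivInnerCLM ℝ (gradient F x, q - x)).comp
      ((fderiv ℝ (gradient F) x).prod
        (-(ContinuousLinearMap.id ℝ (EuclideanSpace ℝ (Fin d)))))) with hDD
  have hderiv : ∀ x ∈ 𝒳, HasFDerivAt (fun y => breg F q y) (DD x) x := by
    intro x hx
    have hAx : HasFDerivAt F (fderiv ℝ F x) x := hFd x hx
    have hqy : HasFDerivAt (fun y : EuclideanSpace ℝ (Fin d) => q - y)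
        (-(ContinuousLinearMap.id ℝ (EuclideanSpace ℝ (Fin d)))) x := by
      simpa using (hasFDerivAt_id x).const_sub q
    have hBx := (HasFDerivAt.inner ℝ (hGd x hx) hqy)
    have hsum := (hAx.add hBx).const_sub (F q)
    have heq : (fun y => breg F q y)
        = fun y => F q - (F y + ⟪gradient F y, q - y⟫) := by
      funext y
      simp [breg]
      ring
    rw [heq]
    exact hsum
  have hDDnorm : ∀ x, ‖DD x‖ ≤ ‖fderiv ℝ (gradient F) x‖ * ‖q - x‖ := by
    intro x
    rw [hDD]
    simp only [norm_neg]
    apply ContinuousLinearMap.opNorm_le_bound _ (by positivity)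
    intro v
    have happ : (fderiv ℝ F x + (fderivInnerCLM ℝ (gradient F x, q - x)).comp
        ((fderiv ℝ (gradient F) x).prod
          (-(ContinuousLinearMap.id ℝ (EuclideanSpace ℝ (Fin d)))))) v
        = ⟪fderiv ℝ (gradient F) x v, q - x⟫ := by
      simp only [ContinuousLinearMap.add_apply, ContinuousLinearMap.comp_apply,
        ContinuousLinearMap.prod_apply, ContinuousLinearMap.neg_apply,
        ContinuousLinearMap.coe_id', id_eq, fderivInnerCLM_apply, inner_neg_right]
      rw [← hinner]
      ring
    rw [happ, Real.norm_eq_abs]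
    calc |⟪fderiv ℝ (gradient F) x v, q - x⟫|
        ≤ ‖fderiv ℝ (gradient F) x v‖ * ‖q - x‖ := abs_real_inner_le_norm _ _
      _ ≤ (‖fderiv ℝ (gradient F) x‖ * ‖v‖) * ‖q - x‖ := by
          apply mul_le_mul_of_nonneg_right (ContinuousLinearMap.le_opNorm _ _) (norm_nonneg _)
      _ = ‖fderiv ℝ (gradient F) x‖ * ‖q - x‖ * ‖v‖ := by ring
  -- maximum of breg F q · over the ball
  have hφc : ContinuousOn (fun y => breg F q y) B := by
    have h1 : ContinuousOn F B := hF.continuousOn.mono hBw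
    have h2 : ContinuousOn (gradient F) B := hGc.mono hBw
    have h3 : ContinuousOn (fun y : EuclideanSpace ℝ (Fin d) => ⟪gradient F y, q - y⟫) B :=
      h2.inner ((continuous_const.sub continuous_id).continuousOn)
    have : (fun y => breg F q y) = fun y => F q - F y - ⟪gradient F y, q - y⟫ := rfl
    rw [this]
    exact (continuousOn_const.sub h1).sub h3
  obtain ⟨pm, hpmB, hpmax⟩ :=
    (isCompact_closedBall c r).exists_isMaxOn ⟨c, mem_closedBall_self hr.le⟩ hφc
  set M : ℝ := breg F q pm with hM
  have hmax : ∀ y ∈ B, breg F q y ≤ M := fun y hy => hpmax hy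
  have hM0 : 0 ≤ M := le_trans (hnn q hq c (hBw (mem_closedBall_self hr.le)))
    (hmax c (mem_closedBall_self hr.le))
  -- uniform pairwise bound on the ball
  have pair : ∀ a ∈ B, ∀ b ∈ B, |breg F q a - breg F q b| ≤ 2 * τ ^ 2 / β * M := by
    intro a ha b hb
    by_cases hab : a = b
    · rw [hab]
      simp only [sub_self, abs_zero]
      positivity
    · have hdab : 0 < dist a b := dist_pos.mpr hab
      have hbound : ∀ x ∈ B, ‖DD x‖ ≤ 2 * τ ^ 2 * M / (β * dist a b) := by
        intro x hx
        have h1 := hDDnorm x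
        have hqx : β * dist a b ≤ ‖q - x‖ := by
          calc β * dist a b ≤ β * diam B :=
                mul_le_mul_of_nonneg_left
                  (dist_le_diam_of_mem isBounded_closedBall ha hb) hβ0.le
            _ ≤ infDist q B := hsep
            _ ≤ dist q x := infDist_le_dist_of_mem hx
            _ = ‖q - x‖ := by rw [dist_eq_norm]
        have h2 : ‖fderiv ℝ (gradient F) x‖ * ‖q - x‖ * (β * dist a b)
            ≤ 2 * τ ^ 2 * M := by
          calc ‖fderiv ℝ (gradient F) x‖ * ‖q - x‖ * (β * dist a b)
              ≤ ‖fderiv ℝ (gradient F) x‖ * ‖q - x‖ * ‖q - x‖ := by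
                apply mul_le_mul_of_nonneg_left hqx (by positivity)
            _ = ‖fderiv ℝ (gradient F) x‖ * ‖q - x‖ ^ 2 := by ring
            _ ≤ 2 * τ ^ 2 * breg F q x := key x (hBw hx)
            _ ≤ 2 * τ ^ 2 * M := by
                apply mul_le_mul_of_nonneg_left (hmax x hx) (by positivity)
        rw [le_div_iff₀ (by positivity)]
        calc ‖DD x‖ * (β * dist a b) ≤ ‖fderiv ℝ (gradient F) x‖ * ‖q - x‖ * (β * dist a b) := by
              apply mul_le_mul_of_nonneg_right h1 (by positivity)
          _ ≤ 2 * τ ^ 2 * M := h2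
      have hmv := (convex_closedBall c r).norm_image_sub_le_of_norm_hasFDerivWithin_le
        (fun x hx => (hderiv x (hBw hx)).hasFDerivWithinAt) hbound hb ha
      rw [Real.norm_eq_abs] at hmv
      have heq : 2 * τ ^ 2 * M / (β * dist a b) * ‖a - b‖ = 2 * τ ^ 2 / β * M := by
        rw [← dist_eq_norm]
        field_simp
      rw [heq] at hmv
      exact hmv
  -- final arithmetic
  intro p hp p' hp'
  have hA : 0 ≤ breg F q p := hnn q hq p (hBw hp)
  have hk : 2 * τ ^ 2 / β ≤ ε / 2 := by
    rw [div_le_iff₀ hβ0]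
    have h10 : 4 * τ ^ 2 ≤ β * ε := by
      have := (div_le_iff₀ hε0).mp hβ
      linarith
    nlinarith
  have h1 := pair pm hpmB p hp
  have h2 := pair p hp p' hp'
  have hkM : 2 * τ ^ 2 / β * M ≤ ε / 2 * M := mul_le_mul_of_nonneg_right hk hM0
  have h3 : M - breg F q p ≤ ε / 2 * M := by
    have := le_abs_self (M - breg F q p)
    linarith
  have hM2 : M ≤ 2 * breg F q p := by nlinarith
  calc |breg F q p - breg F q p'| ≤ 2 * τ ^ 2 / β * M := h2
    _ ≤ ε / 2 * M := hkM
    _ ≤ ε / 2 * (2 * breg F q p) := by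
        apply mul_le_mul_of_nonneg_left hM2 (by positivity)
    _ = ε * breg F q p := by ring
end
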